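/- arXiv:math/0009204 — 4 statements merged into one kernel-verified Lean document; each statement's English description precedes it below -/
import Mathlib

section
/- Let (a_k)_{k≥0} be a nondecreasing sequence in [0,1]. For all integers s ≤ t, and every integer m ≥ 1, ℙ(s − τ[s,t] ≥ m) ≤ ∑_{i=0}^{t−s} ρ_{m+i}, where s − τ[s,t] := +∞ on the event {τ[s,t] = −∞}. The same bound holds for t = +∞ with the series ∑_{i≥0} ρ_{m+i} on the right-hand side. -/
open MeasureTheory Filter

/-- House-of-cards chain: `hoc a u m k` is `W^m_{m+k}`. -/
noncomputable def hoc (a : ℕ → ℝ) (u : ℤ → ℝ) (m : ℤ) : ℕ → ℕ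
  | 0 => 0
  | k + 1 => if u (m + k + 1) < a (hoc a u m k) then hoc a u m k + 1 else 0

/-- Regeneration time `τ[s,t]`. -/
noncomputable def tau (a : ℕ → ℝ) (u : ℤ → ℝ) (s t : ℤ) : WithBot ℤ :=
  sSup {x : WithBot ℤ | ∃ m : ℤ, x = (m : WithBot ℤ) ∧ m ≤ s ∧
    ∀ j : ℤ, m ≤ j → j ≤ t → u j < a (j - m).toNat}

/-- Regeneration time `τ[s,∞]`. -/
noncomputable def tauInf (a : ℕ → ℝ) (u : ℤ → ℝ) (s : ℤ) : WithBot ℤ :=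
  sSup {x : WithBot ℤ | ∃ m : ℤ, x = (m : WithBot ℤ) ∧ m ≤ s ∧
    ∀ j : ℤ, m ≤ j → u j < a (j - m).toNat}

/-- Return probability `ρ_k := ℙ(W^0_k = 0)`; note `ρ_0 = 1` automatically. -/
noncomputable def rho (a : ℕ → ℝ) (μ : Measure (ℤ → ℝ)) (k : ℕ) : ENNReal :=
  μ {u | hoc a u 0 k = 0}

/-- The coordinates are i.i.d. uniform on `[0,1)` under `μ`. -/
def IsIIDUniform (μ : Measure (ℤ → ℝ)) : Prop :=
  ProbabilityTheory.iIndepFun (m := fun _ : ℤ => (inferInstance : MeasurableSpace ℝ))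
    (fun i (u : ℤ → ℝ) => u i) μ ∧
  ∀ i : ℤ, μ.map (fun u => u i) = volume.restrict (Set.Ico (0:ℝ) 1)

/-! ### Auxiliary deterministic lemmas -/

/-- Structure of the house-of-cards chain: there is a "last zero" `z` with the
corresponding record of successes since then. -/
lemma hoc_struct (a : ℕ → ℝ) (u : ℤ → ℝ) (m : ℤ) (k : ℕ) :
    ∃ z, z ≤ k ∧ hoc a u m z = 0 ∧ hoc a u m k = k - z ∧
      ∀ i, z < i → i ≤ k → u (m + i) < a (i - z - 1) := by
  induction k with
  | zero => exact ⟨0, le_rfl, rfl, rfl, by omega⟩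
  | succ k ih =>
    obtain ⟨z, hzk, hz0, hck, hcond⟩ := ih
    by_cases h : u (m + k + 1) < a (hoc a u m k)
    · refine ⟨z, by omega, hz0, ?_, ?_⟩
      · show (if u (m + k + 1) < a (hoc a u m k) then hoc a u m k + 1 else 0) = k + 1 - z
        rw [if_pos h, hck]; omega
      · intro i hzi hik
        rcases Nat.lt_or_ge i (k+1) with hik' | hik'
        · exact hcond i hzi (by omega)
        · have hi : i = k + 1 := by omega
          subst hi
          have harg : m + ((k:ℤ) + 1) = m + (k:ℤ) + 1 := by ring
          have hc : ((k+1:ℕ):ℤ) = (k:ℤ) + 1 := by push_cast; ring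
          rw [hc, harg]
          have hidx : k + 1 - z - 1 = k - z := by omega
          rw [hidx, ← hck]; exact h
    · refine ⟨k+1, le_rfl, ?_, ?_, by omega⟩
      · show (if u (m + k + 1) < a (hoc a u m k) then hoc a u m k + 1 else 0) = 0
        rw [if_neg h]
      · show (if u (m + k + 1) < a (hoc a u m k) then hoc a u m k + 1 else 0) = k + 1 - (k+1)
        rw [if_neg h]; omega

/-- The same chain, driven by a sequence indexed by `ℕ`. -/
noncomputable def hocG (a : ℕ → ℝ) : ℕ → (ℕ → ℝ) → ℕ
  | 0, _ => 0
  | k+1, v => if v k < a (hocG a k v) then hocG a k v + 1 else 0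

lemma hoc_eq_hocG (a : ℕ → ℝ) (u : ℤ → ℝ) (m : ℤ) :
    ∀ k, hoc a u m k = hocG a k (fun i => u (m + 1 + i)) := by
  intro k
  induction k with
  | zero => rfl
  | succ k ih =>
    show (if u (m + k + 1) < a (hoc a u m k) then hoc a u m k + 1 else 0) = _
    have harg : m + (k:ℤ) + 1 = m + 1 + (k:ℤ) := by ring
    rw [ih, harg]; rfl

lemma hocG_congr (a : ℕ → ℝ) : ∀ (k : ℕ) (v w : ℕ → ℝ), (∀ i, i < k → v i = w i) →
    hocG a k v = hocG a k w := by
  intro k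
  induction k with
  | zero => intro v w _; rfl
  | succ k ih =>
    intro v w h
    show (if v k < a (hocG a k v) then hocG a k v + 1 else 0)
        = (if w k < a (hocG a k w) then hocG a k w + 1 else 0)
    rw [ih v w (fun i hi => h i (by omega)), h k (by omega)]

lemma measurable_hocG (a : ℕ → ℝ) : ∀ k, Measurable (hocG a k) := by
  intro k
  induction k with
  | zero => exact measurable_const
  | succ k ih =>
    exact Measurable.ite
      (measurableSet_lt (measurable_pi_apply k) (measurable_from_top.comp ih))
      (measurable_from_top.comp ih) measurable_const

/-! ### The law of a block of coordinates -/

/-- The block of coordinates `m+1, …, m+k`. -/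
def evalBlock (m : ℤ) (k : ℕ) : (ℤ → ℝ) → (Fin k → ℝ) := fun u j => u (m + 1 + (j : ℕ))

lemma measurable_evalBlock (m : ℤ) (k : ℕ) : Measurable (evalBlock m k) :=
  measurable_pi_lambda _ fun _ => measurable_pi_apply _

lemma map_evalBlock (μ : Measure (ℤ → ℝ)) [IsProbabilityMeasure μ] (hiid : IsIIDUniform μ)
    (m : ℤ) (k : ℕ) :
    Measure.pi (fun _ : Fin k => volume.restrict (Set.Ico (0:ℝ) 1)) = μ.map (evalBlock m k) := by
  refine Measure.pi_eq fun E hE => ?_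
  rw [Measure.map_apply (measurable_evalBlock m k) (MeasurableSet.univ_pi hE)]
  have hg : Function.Injective (fun j : Fin k => m + 1 + (j : ℕ)) := by
    intro j j' h
    simp only at h
    have : ((j:ℕ):ℤ) = ((j':ℕ):ℤ) := by omega
    exact Fin.ext (by exact_mod_cast this)
  set sets : ℤ → Set ℝ := fun n => ⋂ (j : Fin k) (_ : m + 1 + (j : ℕ) = n), E j with hsets
  have hsets_eq : ∀ j : Fin k, sets (m + 1 + (j:ℕ)) = E j := by
    intro j
    apply Set.Subset.antisymm
    · intro x hx
      simp only [hsets, Set.mem_iInter] at hx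
      exact hx j rfl
    · intro x hx
      simp only [hsets, Set.mem_iInter]
      intro j' hj'
      rwa [hg hj']
  have hpre : evalBlock m k ⁻¹' (Set.univ.pi E)
      = ⋂ n ∈ Finset.image (fun j : Fin k => m + 1 + (j : ℕ)) Finset.univ,
          (fun u : ℤ → ℝ => u n) ⁻¹' (sets n) := by
    ext u
    simp only [Set.mem_preimage, Set.mem_pi, Set.mem_univ, forall_true_left, Set.mem_iInter,
      Finset.mem_image, Finset.mem_univ, true_and]
    constructor
    · rintro h n ⟨j, rfl⟩
      rw [hsets_eq j]; exact h j
    · intro h j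
      have := h _ ⟨j, rfl⟩
      rwa [hsets_eq j] at this
  rw [hpre, hiid.1.measure_inter_preimage_eq_mul _ (fun n _ => by
    exact MeasurableSet.iInter fun j => MeasurableSet.iInter fun _ => hE j)]
  rw [Finset.prod_image (fun j _ j' _ h => hg h)]
  refine Finset.prod_congr rfl fun j _ => ?_
  rw [hsets_eq j, ← hiid.2 (m + 1 + (j:ℕ))]
  exact (Measure.map_apply (measurable_pi_apply (m + 1 + (j:ℕ)) :
    Measurable fun u : ℤ → ℝ => u (m + 1 + (j:ℕ))) (hE j)).symm

/-! ### `ℙ(W^m_{m+k} = 0)` does not depend on `m` -/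

/-- The event `{W_k = 0}` as a set in finite dimensions. -/
def EzeroSet (a : ℕ → ℝ) (k : ℕ) : Set (Fin k → ℝ) :=
  {w | hocG a k (fun i => if h : i < k then w ⟨i, h⟩ else 0) = 0}

lemma measurable_extend (k : ℕ) :
    Measurable (fun (w : Fin k → ℝ) (i : ℕ) => if h : i < k then w ⟨i, h⟩ else 0) := by
  refine measurable_pi_lambda _ fun i => ?_
  by_cases h : i < k
  · simp only [dif_pos h]; exact measurable_pi_apply _
  · simp only [dif_neg h]; exact measurable_const

lemma measurableSet_EzeroSet (a : ℕ → ℝ) (k : ℕ) : MeasurableSet (EzeroSet a k) := by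
  have : EzeroSet a k
      = (fun w : Fin k → ℝ => hocG a k (fun i => if h : i < k then w ⟨i, h⟩ else 0)) ⁻¹' {0} := by
    ext w; simp [EzeroSet]
  rw [this]
  exact ((measurable_hocG a k).comp (measurable_extend k)) (measurableSet_singleton 0)

lemma hoc_event (a : ℕ → ℝ) (m : ℤ) (k : ℕ) :
    {u : ℤ → ℝ | hoc a u m k = 0} = evalBlock m k ⁻¹' EzeroSet a k := by
  have key : ∀ u : ℤ → ℝ,
      hoc a u m k = hocG a k (fun i => if h : i < k then evalBlock m k u ⟨i, h⟩ else 0) :=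
    fun u => (hoc_eq_hocG a u m k).trans
      (hocG_congr a k _ _ (fun i hi => by simp [evalBlock, hi]))
  ext u
  simp only [Set.mem_setOf_eq, Set.mem_preimage, EzeroSet, key u]

lemma hoc_measure (a : ℕ → ℝ) (μ : Measure (ℤ → ℝ)) [IsProbabilityMeasure μ]
    (hiid : IsIIDUniform μ) (m : ℤ) (k : ℕ) :
    μ {u | hoc a u m k = 0} = rho a μ k := by
  rw [rho, hoc_event a m k, hoc_event a 0 k,
    ← Measure.map_apply (measurable_evalBlock m k) (measurableSet_EzeroSet a k),
    ← Measure.map_apply (measurable_evalBlock 0 k) (measurableSet_EzeroSet a k),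
    ← map_evalBlock μ hiid m k, ← map_evalBlock μ hiid 0 k]

/-! ### Regeneration from non-vanishing of the chain -/

lemma bddAbove_tauSet (a : ℕ → ℝ) (u : ℤ → ℝ) (s : ℤ) (P : ℤ → Prop) :
    BddAbove {x : WithBot ℤ | ∃ m : ℤ, x = (m : WithBot ℤ) ∧ m ≤ s ∧ P m} := by
  refine ⟨(s : WithBot ℤ), ?_⟩
  rintro x ⟨m', rfl, hm's, -⟩
  exact_mod_cast hm's

lemma regen_finite (a : ℕ → ℝ) (u : ℤ → ℝ) (s t : ℤ) (hst : s ≤ t) (m : ℕ) (hm : 1 ≤ m)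
    (hne : ∀ i : ℕ, i ≤ (t - s).toNat → hoc a u (s - m) (m + i) ≠ 0) :
    ¬ tau a u s t ≤ ((s - m : ℤ) : WithBot ℤ) := by
  obtain ⟨z, hzK, hz0, hcK, hcond⟩ := hoc_struct a u (s - m) (m + (t - s).toNat)
  have htn : ((t - s).toNat : ℤ) = t - s := Int.toNat_of_nonneg (by omega)
  have hzm : z < m := by
    by_contra hzm'
    push_neg at hzm'
    have h := hne (z - m) (by omega)
    rw [show m + (z - m) = z by omega] at h
    exact h hz0
  intro hle
  unfold tau at hle
  have hmem : ((s - m + z + 1 : ℤ) : WithBot ℤ) ∈ {x : WithBot ℤ | ∃ m' : ℤ,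
      x = (m' : WithBot ℤ) ∧ m' ≤ s ∧ ∀ j : ℤ, m' ≤ j → j ≤ t → u j < a (j - m').toNat} := by
    refine ⟨s - m + z + 1, rfl, by omega, ?_⟩
    intro j hj1 hj2
    have hiz : (((j - (s - m)).toNat : ℤ)) = j - (s - m) := Int.toNat_of_nonneg (by omega)
    have h1 : z < (j - (s - m)).toNat := by omega
    have h2 : (j - (s - m)).toNat ≤ m + (t - s).toNat := by omega
    have h := hcond _ h1 h2
    rw [show (s - m : ℤ) + ((j - (s - m)).toNat : ℤ) = j by omega] at h
    rw [show (j - (s - m + z + 1)).toNat = (j - (s - m)).toNat - z - 1 by omega]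
    exact h
  have hcs := (le_csSup (bddAbove_tauSet a u s _) hmem).trans hle
  rw [WithBot.coe_le_coe] at hcs
  omega

lemma regen_infinite (a : ℕ → ℝ) (u : ℤ → ℝ) (s : ℤ) (m : ℕ) (hm : 1 ≤ m)
    (hne : ∀ i : ℕ, hoc a u (s - m) (m + i) ≠ 0) :
    ¬ tauInf a u s ≤ ((s - m : ℤ) : WithBot ℤ) := by
  have claim : ∀ i : ℕ, hoc a u (s - m) (m + i) = hoc a u (s - m) m + i := by
    intro i
    induction i with
    | zero => rfl
    | succ i ih =>
      have hne' := hne (i + 1)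
      have hstep : hoc a u (s - m) (m + (i + 1))
          = if u ((s - m) + (m + i : ℕ) + 1) < a (hoc a u (s - m) (m + i))
            then hoc a u (s - m) (m + i) + 1 else 0 := rfl
      by_cases h : u ((s - m) + (m + i : ℕ) + 1) < a (hoc a u (s - m) (m + i))
      · rw [hstep, if_pos h, ih]; omega
      · exact absurd (hstep.trans (if_neg h)) hne'
  obtain ⟨z, hzm', hz0, hcm, -⟩ := hoc_struct a u (s - m) m
  have hzm : z < m := by
    rcases Nat.lt_or_ge z m with h | h
    · exact h
    · exfalso
      have hz : z = m := by omega
      rw [hz] at hz0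
      refine hne 0 ?_
      rw [Nat.add_zero]
      exact hz0
  intro hle
  unfold tauInf at hle
  have hmem : ((s - m + z + 1 : ℤ) : WithBot ℤ) ∈ {x : WithBot ℤ | ∃ m' : ℤ,
      x = (m' : WithBot ℤ) ∧ m' ≤ s ∧ ∀ j : ℤ, m' ≤ j → u j < a (j - m').toNat} := by
    refine ⟨s - m + z + 1, rfl, by omega, ?_⟩
    intro j hj1
    have hiz : (((j - (s - m)).toNat : ℤ)) = j - (s - m) := Int.toNat_of_nonneg (by omega)
    obtain ⟨z', hz'le, hz'0, hc', hcond'⟩ := hoc_struct a u (s - m) (m + (j - (s - m)).toNat)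
    have hcc := claim (j - (s - m)).toNat
    have hz' : z' = z := by omega
    rw [hz'] at hcond'
    have h1 : z < (j - (s - m)).toNat := by omega
    have h := hcond' _ h1 (by omega)
    rw [show (s - m : ℤ) + ((j - (s - m)).toNat : ℤ) = j by omega] at h
    rw [show (j - (s - m + z + 1)).toNat = (j - (s - m)).toNat - z - 1 by omega]
    exact h
  have hcs := (le_csSup (bddAbove_tauSet a u s _) hmem).trans hle
  rw [WithBot.coe_le_coe] at hcs
  omega

/-- `ℙ(s - τ[s,t] ≥ m) ≤ ∑_{i=0}^{t-s} ρ_{m+i}` for `m ≥ 1`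
(the event `s - τ[s,t] ≥ m` is `τ[s,t] ≤ s - m`, which includes `τ[s,t] = -∞`),
and the same bound for `t = ∞` with the full series on the right. -/
theorem stmt2 (a : ℕ → ℝ) (ha : ∀ k, a k ∈ Set.Icc (0:ℝ) 1) (hmono : Monotone a)
    (μ : Measure (ℤ → ℝ)) [IsProbabilityMeasure μ] (hiid : IsIIDUniform μ)
    (s t : ℤ) (hst : s ≤ t) (m : ℕ) (hm : 1 ≤ m) :
    μ {u | tau a u s t ≤ ((s - m : ℤ) : WithBot ℤ)} ≤
        ∑ i ∈ Finset.range ((t - s).toNat + 1), rho a μ (m + i) ∧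
      μ {u | tauInf a u s ≤ ((s - m : ℤ) : WithBot ℤ)} ≤ ∑' i : ℕ, rho a μ (m + i) := by
  constructor
  · have hsub : {u : ℤ → ℝ | tau a u s t ≤ ((s - m : ℤ) : WithBot ℤ)} ⊆
        ⋃ i ∈ Finset.range ((t - s).toNat + 1),
          {u : ℤ → ℝ | hoc a u (s - m) (m + i) = 0} := by
      intro u hu
      by_contra hnot
      refine regen_finite a u s t hst m hm (fun i hi h0 => hnot ?_) hu
      exact Set.mem_biUnion (Finset.mem_range.mpr (by omega)) h0
    calc μ {u | tau a u s t ≤ ((s - m : ℤ) : WithBot ℤ)}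
        ≤ μ (⋃ i ∈ Finset.range ((t - s).toNat + 1),
            {u : ℤ → ℝ | hoc a u (s - m) (m + i) = 0}) := measure_mono hsub
      _ ≤ ∑ i ∈ Finset.range ((t - s).toNat + 1),
            μ {u : ℤ → ℝ | hoc a u (s - m) (m + i) = 0} :=
          measure_biUnion_finset_le _ _
      _ = ∑ i ∈ Finset.range ((t - s).toNat + 1), rho a μ (m + i) :=
          Finset.sum_congr rfl fun i _ => hoc_measure a μ hiid (s - m) (m + i)
  · have hsub : {u : ℤ → ℝ | tauInf a u s ≤ ((s - m : ℤ) : WithBot ℤ)} ⊆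
        ⋃ i : ℕ, {u : ℤ → ℝ | hoc a u (s - m) (m + i) = 0} := by
      intro u hu
      by_contra hnot
      refine regen_infinite a u s m hm (fun i h0 => hnot ?_) hu
      exact Set.mem_iUnion.mpr ⟨i, h0⟩
    calc μ {u | tauInf a u s ≤ ((s - m : ℤ) : WithBot ℤ)}
        ≤ μ (⋃ i : ℕ, {u : ℤ → ℝ | hoc a u (s - m) (m + i) = 0}) := measure_mono hsub
      _ ≤ ∑' i : ℕ, μ {u : ℤ → ℝ | hoc a u (s - m) (m + i) = 0} := measure_iUnion_le _
      _ = ∑' i : ℕ, rho a μ (m + i) :=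
          tsum_congr fun i => hoc_measure a μ hiid (s - m) (m + i)
end

section
/- Let (a_k)_{k≥0} be a nondecreasing sequence in [0,1]. Then pointwise on Ω, for all integers j ≤ s ≤ t: τ[s,t] < j holds if and only if there exists an integer n ∈ [s,t] with W^{j−1}_n = 0. Consequently, τ[s,t] = 1 + sup{m ∈ ℤ : m < s and W^m_n > 0 for all integers n ∈ [s,t]}, with the conventions sup ∅ = −∞ and 1 + (−∞) = −∞. -/
open MeasureTheory Filter

/-- `W^m_n` for integers `m ≤ n`. -/
noncomputable def W (a : ℕ → ℝ) (u : ℤ → ℝ) (m n : ℤ) : ℕ := hoc a u m (n - m).toNat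

lemma hoc_succ (a : ℕ → ℝ) (u : ℤ → ℝ) (m : ℤ) (k : ℕ) :
    hoc a u m (k + 1) = if u (m + k + 1) < a (hoc a u m k) then hoc a u m k + 1 else 0 := rfl

lemma hoc_le (a : ℕ → ℝ) (u : ℤ → ℝ) (m : ℤ) : ∀ k, hoc a u m k ≤ k
  | 0 => le_refl 0
  | k + 1 => by
    rw [hoc_succ]
    split
    · exact Nat.succ_le_succ (hoc_le a u m k)
    · exact Nat.zero_le _

lemma W_le (a : ℕ → ℝ) (u : ℤ → ℝ) (m n : ℤ) : W a u m n ≤ (n - m).toNat := hoc_le a u m _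

lemma W_succ (a : ℕ → ℝ) (u : ℤ → ℝ) {m n : ℤ} (h : m ≤ n) :
    W a u m (n + 1) = if u (n + 1) < a (W a u m n) then W a u m n + 1 else 0 := by
  unfold W
  have h1 : (n + 1 - m).toNat = (n - m).toNat + 1 := by omega
  rw [h1, hoc_succ]
  have h2 : m + ((n - m).toNat : ℤ) + 1 = n + 1 := by omega
  rw [h2]

lemma W_pos_step (a : ℕ → ℝ) (u : ℤ → ℝ) {m n : ℤ} (h : m < n) (hp : 0 < W a u m n) :
    u n < a (W a u m (n - 1)) ∧ W a u m n = W a u m (n - 1) + 1 := by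
  have h1 : m ≤ n - 1 := by omega
  have h2 := W_succ a u (n := n - 1) h1
  rw [show n - 1 + 1 = n by ring] at h2
  by_cases hc : u n < a (W a u m (n - 1))
  · rw [h2, if_pos hc]; exact ⟨hc, rfl⟩
  · rw [h2, if_neg hc] at hp; exact absurd hp (lt_irrefl 0)

/-- Descend: positive values force a staircase. -/
lemma W_descend (a : ℕ → ℝ) (u : ℤ → ℝ) {m n : ℤ} (hmn : m ≤ n) :
    ∀ k : ℕ, k ≤ W a u m n → W a u m (n - k) = W a u m n - k := by
  intro k
  induction k with
  | zero => intro _; simp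
  | succ k ih =>
    intro hk
    have hk' : k ≤ W a u m n := by omega
    have ihk := ih hk'
    have hWle := W_le a u m n
    have hmlt : m < n - k := by omega
    have hpos : 0 < W a u m (n - k) := by omega
    have := (W_pos_step a u hmlt hpos).2
    have : W a u m (n - k - 1) = W a u m (n - k) - 1 := by omega
    rw [show n - (k + 1 : ℕ) = n - k - 1 by push_cast; ring, this, ihk]
    omega

/-- Forward: a regeneration at `m > b` keeps `W^b` positive from `m` to `t`. -/
lemma W_forward (a : ℕ → ℝ) (ha : ∀ k, a k ∈ Set.Icc (0:ℝ) 1) (hmono : Monotone a)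
    (u : ℤ → ℝ) {b m t : ℤ} (hbm : b < m)
    (cond : ∀ i : ℤ, m ≤ i → i ≤ t → u i < a (i - m).toNat) :
    ∀ n : ℤ, m ≤ n → n ≤ t → (n - m).toNat + 1 ≤ W a u b n := by
  refine fun n hmn => Int.le_induction (motive := fun n _ => n ≤ t → (n - m).toNat + 1 ≤ W a u b n) ?_ ?_ n hmn
  · intro hmt
    have h2 := W_succ a u (m := b) (n := m - 1) (by omega)
    rw [show m - 1 + 1 = m by ring] at h2
    have hu : u m < a 0 := by simpa using cond m le_rfl hmt
    have : u m < a (W a u b (m - 1)) := lt_of_lt_of_le hu (hmono (Nat.zero_le _))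
    rw [h2, if_pos this]
    omega
  · intro n hn ih hnt
    have ihn := ih (by omega)
    have hu : u (n + 1) < a ((n + 1 - m).toNat) := cond (n + 1) (by omega) hnt
    have : u (n + 1) < a (W a u b n) :=
      lt_of_lt_of_le hu (hmono (by omega))
    rw [W_succ a u (by omega : b ≤ n), if_pos this]
    omega

/-- Core combinatorial equivalence. -/
lemma core (a : ℕ → ℝ) (ha : ∀ k, a k ∈ Set.Icc (0:ℝ) 1) (hmono : Monotone a)
    (u : ℤ → ℝ) (j s t : ℤ) (hjs : j ≤ s) (hst : s ≤ t) :
    (∃ m : ℤ, j ≤ m ∧ m ≤ s ∧ ∀ i : ℤ, m ≤ i → i ≤ t → u i < a (i - m).toNat)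
      ↔ ∀ n : ℤ, s ≤ n → n ≤ t → 0 < W a u (j - 1) n := by
  constructor
  · rintro ⟨m, hjm, hms, cond⟩ n hsn hnt
    have := W_forward a ha hmono u (by omega : j - 1 < m) cond n (le_trans hms hsn) hnt
    omega
  · intro hpos
    set Wt : ℕ := W a u (j - 1) t with hWt
    have hWtpos : 0 < Wt := hpos t hst le_rfl
    have hWtle : Wt ≤ (t - (j - 1)).toNat := W_le a u _ _
    set m : ℤ := t - Wt + 1 with hm
    have hjm : j ≤ m := by omega
    have hzero : W a u (j - 1) (t - Wt) = 0 := by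
      have := W_descend a u (by omega : (j:ℤ) - 1 ≤ t) Wt le_rfl
      omega
    have hms : m ≤ s := by
      by_contra hc
      have h1 : s ≤ t - Wt := by omega
      have := hpos (t - Wt) h1 (by omega)
      omega
    refine ⟨m, hjm, hms, fun i hmi hit => ?_⟩
    -- W at i - 1
    have hk1 : ((t - i + 1).toNat : ℤ) = t - i + 1 := by omega
    have hd1 := W_descend a u (by omega : (j:ℤ) - 1 ≤ t) (t - i + 1).toNat (by omega)
    rw [show t - ((t - i + 1).toNat : ℤ) = i - 1 by omega] at hd1
    -- W at i is positive
    have hk2 : ((t - i).toNat : ℤ) = t - i := by omega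
    have hd2 := W_descend a u (by omega : (j:ℤ) - 1 ≤ t) (t - i).toNat (by omega)
    rw [show t - ((t - i).toNat : ℤ) = i by omega] at hd2
    have hipos : 0 < W a u (j - 1) i := by omega
    have := (W_pos_step a u (by omega : j - 1 < i) hipos).1
    have heq : W a u (j - 1) (i - 1) = (i - m).toNat := by omega
    rwa [heq] at this

lemma sSup_eq_greatest {P : ℤ → Prop} {M : ℤ} (hM : P M) (hub : ∀ z, P z → z ≤ M) :
    sSup {x : WithBot ℤ | ∃ m : ℤ, x = (m : WithBot ℤ) ∧ P m} = (M : WithBot ℤ) := by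
  apply le_antisymm
  · refine csSup_le ⟨M, M, rfl, hM⟩ ?_
    rintro x ⟨m, rfl, hm⟩
    exact_mod_cast hub m hm
  · refine le_csSup ⟨(M : WithBot ℤ), ?_⟩ ⟨M, rfl, hM⟩
    rintro x ⟨m, rfl, hm⟩
    exact_mod_cast hub m hm

lemma sSup_eq_bot_of_empty {P : ℤ → Prop} (h : ¬ ∃ m, P m) :
    sSup {x : WithBot ℤ | ∃ m : ℤ, x = (m : WithBot ℤ) ∧ P m} = ⊥ := by
  have : {x : WithBot ℤ | ∃ m : ℤ, x = (m : WithBot ℤ) ∧ P m} = ∅ := by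
    ext x
    simp only [Set.mem_setOf_eq, Set.mem_empty_iff_false, iff_false]
    rintro ⟨m, rfl, hm⟩
    exact h ⟨m, hm⟩
  rw [this]
  exact WithBot.sSup_empty

/-- pointwise, for `j ≤ s ≤ t`: `τ[s,t] < j` iff some `n ∈ [s,t]` has
`W^{j-1}_n = 0`; consequently `τ[s,t] = 1 + sup{m < s : W^m_n > 0 ∀ n ∈ [s,t]}`
(in `WithBot ℤ`, where `sup ∅ = ⊥` and `1 + ⊥ = ⊥`). -/
theorem stmt3 (a : ℕ → ℝ) (ha : ∀ k, a k ∈ Set.Icc (0:ℝ) 1) (hmono : Monotone a)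
    (u : ℤ → ℝ) (j s t : ℤ) (hjs : j ≤ s) (hst : s ≤ t) :
    (tau a u s t < (j : WithBot ℤ) ↔
        ∃ n : ℤ, s ≤ n ∧ n ≤ t ∧ W a u (j - 1) n = 0) ∧
      tau a u s t = 1 + sSup {x : WithBot ℤ | ∃ m : ℤ, x = (m : WithBot ℤ) ∧ m < s ∧
        ∀ n : ℤ, s ≤ n → n ≤ t → 0 < W a u m n} := by
  set Q : ℤ → Prop := fun m => m ≤ s ∧ ∀ i : ℤ, m ≤ i → i ≤ t → u i < a (i - m).toNat with hQ
  have htau : tau a u s t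
      = sSup {x : WithBot ℤ | ∃ m : ℤ, x = (m : WithBot ℤ) ∧ Q m} := by
    rw [tau]
  -- key: for any j' ≤ s, (j' ≤ tau) ↔ positivity of W^{j'-1} on [s,t]
  have key : ∀ j' : ℤ, j' ≤ s →
      ((j' : WithBot ℤ) ≤ tau a u s t ↔ ∀ n : ℤ, s ≤ n → n ≤ t → 0 < W a u (j' - 1) n) := by
    intro j' hj's
    rw [← core a ha hmono u j' s t hj's hst]
    constructor
    · intro hle
      by_cases hne : ∃ m, Q m
      · obtain ⟨M, hMQ, hMub⟩ := Int.exists_greatest_of_bdd ⟨s, fun z hz => hz.1⟩ hne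
        rw [htau, sSup_eq_greatest hMQ hMub] at hle
        have : j' ≤ M := by exact_mod_cast hle
        exact ⟨M, this, hMQ.1, hMQ.2⟩
      · rw [htau, sSup_eq_bot_of_empty hne] at hle
        exact absurd (lt_of_lt_of_le (WithBot.bot_lt_coe j') hle) (lt_irrefl _)
    · rintro ⟨m, hj'm, hms, cond⟩
      rw [htau]
      have hb : BddAbove {x : WithBot ℤ | ∃ m : ℤ, x = (m : WithBot ℤ) ∧ Q m} :=
        ⟨(s : WithBot ℤ), by rintro x ⟨m', rfl, hm'⟩; exact_mod_cast hm'.1⟩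
      have hmem : (m : WithBot ℤ) ∈ {x : WithBot ℤ | ∃ m : ℤ, x = (m : WithBot ℤ) ∧ Q m} :=
        ⟨m, rfl, hms, cond⟩
      exact le_trans (by exact_mod_cast hj'm) (le_csSup hb hmem)
  constructor
  · rw [← not_le, key j hjs]
    push_neg
    constructor
    · rintro ⟨n, hsn, hnt, h0⟩; exact ⟨n, hsn, hnt, by omega⟩
    · rintro ⟨n, hsn, hnt, h0⟩; exact ⟨n, hsn, hnt, by omega⟩
  · by_cases hne : ∃ m, Q m
    · obtain ⟨M, hMQ, hMub⟩ := Int.exists_greatest_of_bdd ⟨s, fun z hz => hz.1⟩ hne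
      rw [htau, sSup_eq_greatest hMQ hMub]
      have hS : sSup {x : WithBot ℤ | ∃ m : ℤ, x = (m : WithBot ℤ) ∧ m < s ∧
          ∀ n : ℤ, s ≤ n → n ≤ t → 0 < W a u m n} = ((M - 1 : ℤ) : WithBot ℤ) := by
        apply sSup_eq_greatest (P := fun m => m < s ∧ ∀ n : ℤ, s ≤ n → n ≤ t → 0 < W a u m n)
        · refine ⟨by omega, ?_⟩
          have := (core a ha hmono u M s t hMQ.1 hst).mp ⟨M, le_rfl, hMQ.1, hMQ.2⟩
          simpa using this
        · rintro m ⟨hms, hpos⟩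
          have := (core a ha hmono u (m + 1) s t (by omega) hst).mpr
            (by simpa using hpos)
          obtain ⟨m', hmm', hm's, cond'⟩ := this
          have := hMub m' ⟨hm's, cond'⟩
          omega
      rw [hS, ← WithBot.coe_one, ← WithBot.coe_add]
      norm_num
    · rw [htau, sSup_eq_bot_of_empty hne]
      have hS : sSup {x : WithBot ℤ | ∃ m : ℤ, x = (m : WithBot ℤ) ∧ m < s ∧
          ∀ n : ℤ, s ≤ n → n ≤ t → 0 < W a u m n} = ⊥ := by
        apply sSup_eq_bot_of_empty
        rintro ⟨m, hms, hpos⟩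
        have := (core a ha hmono u (m + 1) s t (by omega) hst).mpr
          (by simpa using hpos)
        obtain ⟨m', _, hm's, cond'⟩ := this
        exact hne ⟨m', hm's, cond'⟩
      rw [hS, WithBot.add_bot]
end

section
/- Let (a_k)_{k≥0} be a nondecreasing sequence in [0,1] with β := ∏_{k=0}^{∞} a_k > 0, and define N(j) := 1{τ[j,∞] = j} for j ∈ ℤ. Then ℙ(N(j) = 1) = β for every j ∈ ℤ, and for every n ≥ 1 and all integers s_1 < s_2 < … < s_n: ℙ(N(s_ℓ) = 1 for ℓ = 1, …, n) = β · ∏_{ℓ=1}^{n−1} (∏_{k=0}^{s_{ℓ+1} − s_ℓ − 1} a_k). In other words, the point process N of renewal times is a stationary renewal process. -/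
open MeasureTheory Filter

lemma tau_char (a : ℕ → ℝ) (u : ℤ → ℝ) (s : ℤ) :
    tauInf a u s = (s : WithBot ℤ) ↔ ∀ j : ℤ, s ≤ j → u j < a (j - s).toNat := by
  constructor
  · intro h
    by_contra hc
    push_neg at hc
    set S := {x : WithBot ℤ | ∃ m : ℤ, x = (m : WithBot ℤ) ∧ m ≤ s ∧
      ∀ j : ℤ, m ≤ j → u j < a (j - m).toNat} with hS
    have hub : ∀ x ∈ S, x ≤ ((s - 1 : ℤ) : WithBot ℤ) := by
      rintro x ⟨m, rfl, hms, hm⟩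
      have : m ≠ s := by
        rintro rfl
        obtain ⟨j, hj, hj2⟩ := hc
        exact absurd (hm j hj) (not_lt.2 hj2)
      exact_mod_cast Int.le_of_lt_add_one (by omega : m < s - 1 + 1)
    rcases Set.eq_empty_or_nonempty S with he | hne
    · rw [tauInf] at h
      rw [← hS, he, WithBot.sSup_empty] at h
      exact absurd h.symm (by simp)
    · have : tauInf a u s ≤ ((s - 1 : ℤ) : WithBot ℤ) := csSup_le hne hub
      rw [h] at this
      have : s ≤ s - 1 := by exact_mod_cast this
      omega
  · intro h
    have hmem : (s : WithBot ℤ) ∈ {x : WithBot ℤ | ∃ m : ℤ, x = (m : WithBot ℤ) ∧ m ≤ s ∧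
        ∀ j : ℤ, m ≤ j → u j < a (j - m).toNat} := ⟨s, rfl, le_refl s, h⟩
    have hub : ∀ x ∈ {x : WithBot ℤ | ∃ m : ℤ, x = (m : WithBot ℤ) ∧ m ≤ s ∧
        ∀ j : ℤ, m ≤ j → u j < a (j - m).toNat}, x ≤ (s : WithBot ℤ) := by
      rintro x ⟨m, rfl, hms, _⟩
      exact_mod_cast hms
    exact le_antisymm (csSup_le ⟨_, hmem⟩ hub) (le_csSup ⟨_, hub⟩ hmem)

lemma meas_finite (μ : Measure (ℤ → ℝ)) [IsProbabilityMeasure μ] (hiid : IsIIDUniform μ)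
    (F : Finset ℤ) (c : ℤ → ℝ) (hc : ∀ i, c i ∈ Set.Icc (0:ℝ) 1) :
    μ {u : ℤ → ℝ | ∀ i ∈ F, u i < c i} = ∏ i ∈ F, ENNReal.ofReal (c i) := by
  have hset : {u : ℤ → ℝ | ∀ i ∈ F, u i < c i}
      = ⋂ i ∈ F, (fun u : ℤ → ℝ => u i) ⁻¹' Set.Iio (c i) := by
    ext u; simp [Set.mem_iInter]
  rw [hset, (ProbabilityTheory.iIndepFun_iff_measure_inter_preimage_eq_mul.mp hiid.1) F
    (sets := fun i => Set.Iio (c i)) (fun i _ => measurableSet_Iio)]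
  refine Finset.prod_congr rfl fun i _ => ?_
  have h1 : μ ((fun u : ℤ → ℝ => u i) ⁻¹' Set.Iio (c i))
      = (μ.map (fun u : ℤ → ℝ => u i)) (Set.Iio (c i)) :=
    (Measure.map_apply (measurable_pi_apply i) measurableSet_Iio).symm
  rw [h1, hiid.2 i, Measure.restrict_apply measurableSet_Iio]
  have h2 : Set.Iio (c i) ∩ Set.Ico (0:ℝ) 1 = Set.Ico 0 (c i) := by
    ext x
    simp only [Set.mem_inter_iff, Set.mem_Iio, Set.mem_Ico]
    exact ⟨fun ⟨h1,h2,h3⟩ => ⟨h2,h1⟩, fun ⟨h1,h2⟩ => ⟨h2, h1, lt_of_lt_of_le h2 (hc i).2⟩⟩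
  rw [h2, Real.volume_Ico, sub_zero]

lemma iInf_ofReal_antitone (p : ℕ → ℝ) (hp : Antitone p) (hnn : ∀ m, 0 ≤ p m) :
    ⨅ m, ENNReal.ofReal (p m) = ENNReal.ofReal (⨅ m, p m) := by
  have h1 : Tendsto p atTop (nhds (⨅ m, p m)) :=
    tendsto_atTop_ciInf hp ⟨0, by rintro _ ⟨m, rfl⟩; exact hnn m⟩
  have h2 : Tendsto (fun m => ENNReal.ofReal (p m)) atTop (nhds (ENNReal.ofReal (⨅ m, p m))) :=
    (ENNReal.continuous_ofReal.tendsto _).comp h1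
  have h3 : Tendsto (fun m => ENNReal.ofReal (p m)) atTop (nhds (⨅ m, ENNReal.ofReal (p m))) :=
    tendsto_atTop_ciInf (fun i j hij => ENNReal.ofReal_le_ofReal (hp hij)) (OrderBot.bddBelow _)
  exact tendsto_nhds_unique h3 h2

lemma meas_tail (μ : Measure (ℤ → ℝ)) [IsProbabilityMeasure μ] (hiid : IsIIDUniform μ)
    (b : ℤ) (c : ℤ → ℝ) (hc : ∀ i, c i ∈ Set.Icc (0:ℝ) 1) :
    μ {u : ℤ → ℝ | ∀ i : ℤ, b ≤ i → u i < c i}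
      = ENNReal.ofReal (⨅ m : ℕ, ∏ j ∈ Finset.range m, c (b + j)) := by
  set E : ℕ → Set (ℤ → ℝ) := fun m => {u | ∀ j ∈ Finset.range m, u (b + j) < c (b + j)} with hE
  have hmeasE : ∀ m, μ (E m) = ∏ j ∈ Finset.range m, ENNReal.ofReal (c (b + j)) := by
    intro m
    have hinj : Set.InjOn (fun j : ℕ => b + (j : ℤ)) (Finset.range m) := by
      intro x _ y _ h
      have := add_left_cancel h
      exact_mod_cast this
    have hEq : E m = {u : ℤ → ℝ | ∀ i ∈ (Finset.range m).image (fun j : ℕ => b + (j : ℤ)), u i < c i} := by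
      ext u
      simp only [hE, Set.mem_setOf_eq, Finset.mem_image]
      constructor
      · rintro h i ⟨j, hj, rfl⟩; exact h j hj
      · intro h j hj; exact h _ ⟨j, hj, rfl⟩
    rw [hEq, meas_finite μ hiid _ c hc, Finset.prod_image hinj]
  have hanti : Antitone E := by
    intro m n hmn u hu j hj
    exact hu j (Finset.mem_range.2 (lt_of_lt_of_le (Finset.mem_range.1 hj) hmn))
  have hInter : {u : ℤ → ℝ | ∀ i : ℤ, b ≤ i → u i < c i} = ⋂ m, E m := by
    ext u
    simp only [Set.mem_setOf_eq, Set.mem_iInter, hE, Finset.mem_range]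
    constructor
    · intro h m j hj; exact h (b + j) (by omega)
    · intro h i hi
      have := h ((i - b).toNat + 1) (i - b).toNat (by omega)
      rwa [show b + ((i - b).toNat : ℤ) = i by omega] at this
  have hmeasurable : ∀ m, NullMeasurableSet (E m) μ := by
    intro m
    have : E m = ⋂ j ∈ Finset.range m, {u : ℤ → ℝ | u (b + j) < c (b + j)} := by
      ext u; simp [hE]
    rw [this]
    exact (MeasurableSet.biInter (Finset.range m).countable_toSet
      (fun j _ => measurableSet_lt (measurable_pi_apply _) measurable_const)).nullMeasurableSet
  have hdir : Directed (fun x1 x2 => x1 ⊇ x2) E := fun m n =>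
    ⟨max m n, hanti (le_max_left m n), hanti (le_max_right m n)⟩
  rw [hInter, Directed.measure_iInter hmeasurable hdir ⟨0, measure_ne_top μ _⟩]
  have : ∀ m, μ (E m) = ENNReal.ofReal (∏ j ∈ Finset.range m, c (b + j)) := by
    intro m
    rw [hmeasE m, ENNReal.ofReal_prod_of_nonneg (fun j _ => (hc _).1)]
  simp_rw [this]
  refine iInf_ofReal_antitone _ (antitone_nat_of_succ_le fun m => ?_)
    (fun m => Finset.prod_nonneg fun j _ => (hc _).1)
  rw [Finset.prod_range_succ]
  exact mul_le_of_le_one_right (Finset.prod_nonneg fun j _ => (hc _).1) (hc _).2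

lemma blockProd (a : ℕ → ℝ) (s : ℕ → ℤ) (hs : StrictMono s) :
    ∀ n : ℕ, ∀ m : ℕ, (s n - s 0).toNat ≤ m →
    ∏ j ∈ Finset.range m,
        a ((s 0 + (j:ℤ) - s (Nat.findGreatest (fun l => s l ≤ s 0 + (j:ℤ)) n)).toNat)
      = (∏ l ∈ Finset.range n, ∏ k ∈ Finset.range (s (l+1) - s l).toNat, a k)
        * ∏ k ∈ Finset.range (m - (s n - s 0).toNat), a k := by
  intro n
  induction n with
  | zero =>
    intro m hm
    simp only [Nat.findGreatest_zero, Finset.range_zero, Finset.prod_empty, one_mul,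
      Nat.sub_zero]
    have h0 : (s 0 - s 0).toNat = 0 := by omega
    rw [h0, Nat.sub_zero]
    exact Finset.prod_congr rfl fun j _ => by congr 1; omega
  | succ n ih =>
    intro m hm
    have hsn : s n < s (n + 1) := hs (Nat.lt_succ_self n)
    have h0n : s 0 ≤ s n := hs.monotone (Nat.zero_le n)
    set T' := (s (n + 1) - s 0).toNat with hT'
    have hT : (s n - s 0).toNat ≤ T' := by omega
    have hm' : m = T' + (m - T') := by omega
    rw [hm', Finset.prod_range_add]
    have hfirst : ∏ j ∈ Finset.range T',
        a ((s 0 + (j:ℤ) - s (Nat.findGreatest (fun l => s l ≤ s 0 + (j:ℤ)) (n+1))).toNat)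
        = (∏ l ∈ Finset.range (n+1), ∏ k ∈ Finset.range (s (l+1) - s l).toNat, a k) := by
      have hcongr : ∀ j ∈ Finset.range T',
          a ((s 0 + (j:ℤ) - s (Nat.findGreatest (fun l => s l ≤ s 0 + (j:ℤ)) (n+1))).toNat)
          = a ((s 0 + (j:ℤ) - s (Nat.findGreatest (fun l => s l ≤ s 0 + (j:ℤ)) n)).toNat) := by
        intro j hj
        rw [Nat.findGreatest_succ, if_neg]
        have hj' := Finset.mem_range.1 hj
        omega
      rw [Finset.prod_congr rfl hcongr, ih T' hT]
      have hTT : T' - (s n - s 0).toNat = (s (n+1) - s n).toNat := by omega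
      rw [hTT, Finset.prod_range_succ]
    rw [hfirst]
    have hsecond : ∀ j ∈ Finset.range (m - T'),
        a ((s 0 + ((T' + j : ℕ):ℤ) - s (Nat.findGreatest (fun l => s l ≤ s 0 + ((T' + j : ℕ):ℤ)) (n+1))).toNat)
        = a j := by
      intro j hj
      have h1 : Nat.findGreatest (fun l => s l ≤ s 0 + ((T' + j : ℕ):ℤ)) (n+1) = n+1 := by
        rw [Nat.findGreatest_succ, if_pos]
        push_cast
        omega
      rw [h1]
      congr 1
      push_cast
      omega
    rw [Finset.prod_congr rfl hsecond]
    have hfin : T' + (m - T') - T' = m - T' := by omega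
    rw [hfin]

/-- renewal process: with `β := ∏_{k=0}^∞ a_k > 0` (the infimum of
the nonincreasing partial products) and `N(j) := 1{τ[j,∞] = j}`, one has
`ℙ(N(j) = 1) = β` for all `j`, and for all `s_1 < … < s_n`,
`ℙ(N(s_ℓ) = 1, ℓ = 1,…,n) = β ∏_{ℓ=1}^{n-1} ∏_{k=0}^{s_{ℓ+1}-s_ℓ-1} a_k`. -/
theorem stmt14 (a : ℕ → ℝ) (ha : ∀ k, a k ∈ Set.Icc (0:ℝ) 1) (hmono : Monotone a)
    (hβ : 0 < ⨅ N : ℕ, ∏ k ∈ Finset.range N, a k)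
    (μ : Measure (ℤ → ℝ)) [IsProbabilityMeasure μ] (hiid : IsIIDUniform μ) :
    (∀ j : ℤ, μ {u | tauInf a u j = (j : WithBot ℤ)} =
        ENNReal.ofReal (⨅ N : ℕ, ∏ k ∈ Finset.range N, a k)) ∧
      ∀ n : ℕ, 1 ≤ n → ∀ s : ℕ → ℤ, StrictMono s →
        μ {u | ∀ l : ℕ, l < n → tauInf a u (s l) = (s l : WithBot ℤ)} =
          ENNReal.ofReal ((⨅ N : ℕ, ∏ k ∈ Finset.range N, a k) *
            ∏ l ∈ Finset.range (n - 1),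
              ∏ k ∈ Finset.range (s (l + 1) - s l).toNat, a k) := by
  constructor
  · intro j
    have hEq : {u : ℤ → ℝ | tauInf a u j = (j : WithBot ℤ)}
        = {u : ℤ → ℝ | ∀ i : ℤ, j ≤ i → u i < a (i - j).toNat} := by
      ext u; exact tau_char a u j
    rw [hEq, meas_tail μ hiid j (fun i => a (i - j).toNat) (fun i => ha _)]
    congr 1
    refine iInf_congr fun m => Finset.prod_congr rfl fun k _ => by congr 1; omega
  · intro n hn s hs
    set β := ⨅ N : ℕ, ∏ k ∈ Finset.range N, a k with hβdef
    set N := n - 1 with hN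
    have hnN : n = N + 1 := by omega
    set c : ℤ → ℝ := fun i => a ((i - s (Nat.findGreatest (fun l => s l ≤ i) N)).toNat) with hc
    have hEq : {u : ℤ → ℝ | ∀ l : ℕ, l < n → tauInf a u (s l) = (s l : WithBot ℤ)}
        = {u : ℤ → ℝ | ∀ i : ℤ, s 0 ≤ i → u i < c i} := by
      ext u
      simp only [Set.mem_setOf_eq]
      constructor
      · intro h i hi
        have hL : Nat.findGreatest (fun l => s l ≤ i) N ≤ N := Nat.findGreatest_le N
        have hsL : s (Nat.findGreatest (fun l => s l ≤ i) N) ≤ i :=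
          Nat.findGreatest_spec (P := fun l => s l ≤ i) (Nat.zero_le N) hi
        exact (tau_char a u _).mp (h _ (by omega)) i hsL
      · intro h l hl
        rw [tau_char]
        intro j hj
        have hlL : l ≤ Nat.findGreatest (fun l => s l ≤ j) N :=
          Nat.le_findGreatest (by omega) hj
        have hsL : s l ≤ s (Nat.findGreatest (fun l => s l ≤ j) N) := hs.monotone hlL
        have h0j : s 0 ≤ j := le_trans (hs.monotone (Nat.zero_le l)) hj
        have huj := h j h0j
        rw [hc] at huj
        exact lt_of_lt_of_le huj (hmono (by omega))
    rw [hEq, meas_tail μ hiid (s 0) c (fun i => ha _)]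
    congr 1
    set G := ∏ l ∈ Finset.range N, ∏ k ∈ Finset.range (s (l + 1) - s l).toNat, a k with hG
    have hGnn : 0 ≤ G :=
      Finset.prod_nonneg fun l _ => Finset.prod_nonneg fun k _ => (ha k).1
    set q : ℕ → ℝ := fun m => ∏ j ∈ Finset.range m, c (s 0 + (j:ℤ)) with hq
    set T := (s N - s 0).toNat with hT
    have hqnn : ∀ m, 0 ≤ q m := fun m => Finset.prod_nonneg fun j _ => (ha _).1
    have hqanti : Antitone q := by
      refine antitone_nat_of_succ_le fun m => ?_
      rw [hq]
      simp only
      rw [Finset.prod_range_succ]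
      exact mul_le_of_le_one_right (Finset.prod_nonneg fun j _ => (ha _).1) (ha _).2
    have hbdd : BddBelow (Set.range q) := ⟨0, by rintro _ ⟨m, rfl⟩; exact hqnn m⟩
    have hqT : ∀ k : ℕ, q (T + k) = G * ∏ i ∈ Finset.range k, a i := by
      intro k
      have hbp := blockProd a s hs N (T + k) (by omega)
      have harg : T + k - (s N - s 0).toNat = k := by omega
      rw [harg] at hbp
      rw [hq]
      simp only
      rw [hbp, hG]
    have hkey : (⨅ m, q m) = β * G := by
      have h1 : (⨅ m, q m) = ⨅ k, q (T + k) := by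
        apply le_antisymm
        · exact le_ciInf fun k => ciInf_le hbdd (T + k)
        · refine le_ciInf fun m => ?_
          refine le_trans (ciInf_le ⟨0, by rintro _ ⟨k, rfl⟩; exact hqnn _⟩ m) ?_
          exact hqanti (Nat.le_add_left m T)
      rw [h1]
      have h2 : ∀ k : ℕ, q (T + k) = G * ∏ i ∈ Finset.range k, a i := hqT
      calc (⨅ k, q (T + k)) = ⨅ k, G * ∏ i ∈ Finset.range k, a i := iInf_congr h2
        _ = G * ⨅ k, ∏ i ∈ Finset.range k, a i := (Real.mul_iInf_of_nonneg hGnn _).symm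
        _ = β * G := by rw [hβdef, mul_comm]
    rw [← hkey]
end

section
/- In the binary autoregression setup, assume additionally that C⁻ > 0. Then the following are equivalent: (i) β := ∏_{k=0}^{∞} a_k > 0; (ii) ∑_{k≥0} r_k < ∞; (iii) ∑_{k≥1} k |θ_k| < ∞. -/
open MeasureTheory Filter

/-- `r_k := ∑_{m>k} |θ_m|`. -/
noncomputable def rTail (θ : ℕ → ℝ) (k : ℕ) : ℝ := ∑' m : ℕ, |θ (k + m + 1)|

/-- The coefficients `a_k` of the binary autoregression: for `k ≥ 1`,
`a_k = 1 - sup_w (q(θ_0 + ∑_{m=1}^k θ_m w_m + r_k) - q(θ_0 + ∑_{m=1}^k θ_m w_m - r_k))`,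
the supremum running over `w ∈ {-1,+1}^k`; for `k = 0` this reads
`a_0 = 1 - (q(θ_0 + r_0) - q(θ_0 - r_0))`. -/
noncomputable def aBin (θ : ℕ → ℝ) (q : ℝ → ℝ) (k : ℕ) : ℝ :=
  1 - sSup {d : ℝ | ∃ w : Fin k → ℝ, (∀ i, w i = 1 ∨ w i = -1) ∧
    d = q (θ 0 + (∑ m : Fin k, θ (m.1 + 1) * w m) + rTail θ k)
      - q (θ 0 + (∑ m : Fin k, θ (m.1 + 1) * w m) - rTail θ k)}

/-- `C⁺ := max q′` on `[θ_0 - r_0, θ_0 + r_0]`. -/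
noncomputable def Cplus (θ : ℕ → ℝ) (q : ℝ → ℝ) : ℝ :=
  sSup (deriv q '' Set.Icc (θ 0 - rTail θ 0) (θ 0 + rTail θ 0))

/-- `C⁻ := min q′` on `[θ_0 - r_0, θ_0 + r_0]`. -/
noncomputable def Cminus (θ : ℕ → ℝ) (q : ℝ → ℝ) : ℝ :=
  sInf (deriv q '' Set.Icc (θ 0 - rTail θ 0) (θ 0 + rTail θ 0))

lemma rTail_nonneg (θ : ℕ → ℝ) (k : ℕ) : 0 ≤ rTail θ k :=
  tsum_nonneg (fun _ => abs_nonneg _)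

lemma summable_shift {θ : ℕ → ℝ} (hθ : Summable fun k : ℕ => |θ (k + 1)|) (k : ℕ) :
    Summable fun m : ℕ => |θ (k + m + 1)| := by
  have := (summable_nat_add_iff (f := fun n => |θ (n + 1)|) k).2 hθ
  refine this.congr fun m => ?_
  simp [Nat.add_comm m k]

lemma rTail_split {θ : ℕ → ℝ} (hθ : Summable fun k : ℕ => |θ (k + 1)|) (k : ℕ) :
    rTail θ 0 = (∑ m ∈ Finset.range k, |θ (m + 1)|) + rTail θ k := by
  have h := Summable.sum_add_tsum_nat_add (f := fun n => |θ (n + 1)|) k hθ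
  have h2 : (∑' i : ℕ, |θ (i + k + 1)|) = rTail θ k := by
    unfold rTail; exact tsum_congr fun m => by rw [Nat.add_comm m k]
  have h0 : rTail θ 0 = ∑' i : ℕ, |θ (i + 1)| := by
    unfold rTail; exact tsum_congr fun m => by norm_num
  rw [h0, ← h, h2]

lemma rTail_le {θ : ℕ → ℝ} (hθ : Summable fun k : ℕ => |θ (k + 1)|) (k : ℕ) :
    (∑ m ∈ Finset.range k, |θ (m + 1)|) + rTail θ k ≤ rTail θ 0 :=
  le_of_eq (rTail_split hθ k).symm

lemma deriv_mem_bounds {θ : ℕ → ℝ} {q : ℝ → ℝ} (hq_diff : ContDiff ℝ 1 q)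
    {c : ℝ} (hc : c ∈ Set.Icc (θ 0 - rTail θ 0) (θ 0 + rTail θ 0)) :
    Cminus θ q ≤ deriv q c ∧ deriv q c ≤ Cplus θ q := by
  have hcont : Continuous (deriv q) := hq_diff.continuous_deriv le_rfl
  have hcomp : IsCompact (deriv q '' Set.Icc (θ 0 - rTail θ 0) (θ 0 + rTail θ 0)) :=
    (isCompact_Icc).image hcont
  have hmem : deriv q c ∈ deriv q '' Set.Icc (θ 0 - rTail θ 0) (θ 0 + rTail θ 0) :=
    Set.mem_image_of_mem _ hc
  exact ⟨csInf_le hcomp.bddBelow hmem, le_csSup hcomp.bddAbove hmem⟩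

lemma slope_bounds {θ : ℕ → ℝ} {q : ℝ → ℝ} (hq_diff : ContDiff ℝ 1 q)
    {a b : ℝ} (ha : θ 0 - rTail θ 0 ≤ a) (hab : a ≤ b) (hb : b ≤ θ 0 + rTail θ 0) :
    Cminus θ q * (b - a) ≤ q b - q a ∧ q b - q a ≤ Cplus θ q * (b - a) := by
  rcases eq_or_lt_of_le hab with rfl | hlt
  · simp
  · obtain ⟨c, hc, hderiv⟩ := exists_deriv_eq_slope q hlt
      (hq_diff.continuous.continuousOn) (hq_diff.differentiable one_ne_zero).differentiableOn
    have hcI : c ∈ Set.Icc (θ 0 - rTail θ 0) (θ 0 + rTail θ 0) :=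
      ⟨ha.trans hc.1.le, hc.2.le.trans hb⟩
    obtain ⟨h1, h2⟩ := deriv_mem_bounds hq_diff hcI
    have hba : (0:ℝ) < b - a := by linarith
    have heq : q b - q a = deriv q c * (b - a) := by
      field_simp at hderiv; linarith [hderiv]
    constructor
    · rw [heq]; exact mul_le_mul_of_nonneg_right h1 hba.le
    · rw [heq]; exact mul_le_mul_of_nonneg_right h2 hba.le

lemma aBin_bounds {θ : ℕ → ℝ} (hθ : Summable fun k : ℕ => |θ (k + 1)|)
    {q : ℝ → ℝ} (hq_mono : StrictMono q) (hq_diff : ContDiff ℝ 1 q) (k : ℕ) :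
    2 * Cminus θ q * rTail θ k ≤ 1 - aBin θ q k ∧
    1 - aBin θ q k ≤ 2 * Cplus θ q * rTail θ k ∧
    1 - aBin θ q k ≤ q (θ 0 + rTail θ 0) - q (θ 0 - rTail θ 0) := by
  set r := rTail θ k with hr
  set S := {d : ℝ | ∃ w : Fin k → ℝ, (∀ i, w i = 1 ∨ w i = -1) ∧
    d = q (θ 0 + (∑ m : Fin k, θ (m.1 + 1) * w m) + r)
      - q (θ 0 + (∑ m : Fin k, θ (m.1 + 1) * w m) - r)} with hS
  have hrn : 0 ≤ r := rTail_nonneg θ k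
  have key : ∀ d ∈ S, 2 * Cminus θ q * r ≤ d ∧ d ≤ 2 * Cplus θ q * r ∧
      d ≤ q (θ 0 + rTail θ 0) - q (θ 0 - rTail θ 0) := by
    rintro d ⟨w, hw, rfl⟩
    set x := θ 0 + (∑ m : Fin k, θ (m.1 + 1) * w m) with hx
    have hsum_abs : |∑ m : Fin k, θ (m.1 + 1) * w m| ≤ ∑ m ∈ Finset.range k, |θ (m + 1)| := by
      calc |∑ m : Fin k, θ (m.1 + 1) * w m| ≤ ∑ m : Fin k, |θ (m.1 + 1) * w m| :=
            Finset.abs_sum_le_sum_abs _ _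
        _ = ∑ m : Fin k, |θ (m.1 + 1)| := by
            refine Finset.sum_congr rfl fun m _ => ?_
            rcases hw m with h | h <;> rw [h] <;> simp
        _ = ∑ m ∈ Finset.range k, |θ (m + 1)| := Fin.sum_univ_eq_sum_range (fun m => |θ (m + 1)|) k
    have hbound := rTail_le hθ k
    have habs := abs_le.1 hsum_abs
    have hlo : θ 0 - rTail θ 0 ≤ x - r := by
      simp only [hx]; linarith [habs.1]
    have hhi : x + r ≤ θ 0 + rTail θ 0 := by
      simp only [hx]; linarith [habs.2]
    have hab : x - r ≤ x + r := by linarith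
    obtain ⟨h1, h2⟩ := slope_bounds hq_diff hlo hab hhi
    have h2r : x + r - (x - r) = 2 * r := by ring
    rw [h2r] at h1 h2
    refine ⟨by linarith [h1], by linarith [h2], ?_⟩
    have e1 : q (x + r) ≤ q (θ 0 + rTail θ 0) := hq_mono.monotone hhi
    have e2 : q (θ 0 - rTail θ 0) ≤ q (x - r) := hq_mono.monotone hlo
    linarith
  have hne : S.Nonempty := by
    refine ⟨_, fun _ => 1, fun i => Or.inl rfl, rfl⟩
  have hbdd : BddAbove S := ⟨2 * Cplus θ q * r, fun d hd => (key d hd).2.1⟩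
  have h1a : 1 - aBin θ q k = sSup S := by
    simp only [aBin, hS, hr]; ring
  obtain ⟨d0, hd0⟩ := hne
  refine ⟨?_, ?_, ?_⟩
  · rw [h1a]
    exact le_trans (key d0 hd0).1 (le_csSup hbdd hd0)
  · rw [h1a]; exact csSup_le ⟨d0, hd0⟩ fun d hd => (key d hd).2.1
  · rw [h1a]; exact csSup_le ⟨d0, hd0⟩ fun d hd => (key d hd).2.2

lemma sum_rVsN {θ : ℕ → ℝ} (hθ : Summable fun k : ℕ => |θ (k + 1)|) :
    Summable (fun k : ℕ => rTail θ k) ↔ Summable (fun k : ℕ => (k : ℝ) * |θ k|) := by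
  set g : ℕ × ℕ → ℝ := fun p => |θ (p.1 + p.2 + 1)| with hg
  set h : ℕ × ℕ → ℝ := fun p => if p.2 ≤ p.1 then |θ (p.1 + 1)| else 0 with hh
  have hgn : 0 ≤ g := fun p => abs_nonneg _
  have hhn : 0 ≤ h := fun p => by simp only [hh]; split <;> simp [abs_nonneg]
  have e_inj : Function.Injective (fun p : ℕ × ℕ => ((p.1 + p.2, p.1) : ℕ × ℕ)) := by
    rintro ⟨a, b⟩ ⟨c, d⟩ hcd
    simp only [Prod.mk.injEq] at hcd
    obtain ⟨h1, h2⟩ := hcd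
    simp [Prod.ext_iff]; omega
  have h_zero : ∀ x ∉ Set.range (fun p : ℕ × ℕ => ((p.1 + p.2, p.1) : ℕ × ℕ)), h x = 0 := by
    rintro ⟨j, k⟩ hx
    simp only [hh]
    rw [if_neg]
    intro hkj
    exact hx ⟨(k, j - k), by simp [Prod.ext_iff]; omega⟩
  have hghe : Summable g ↔ Summable h := by
    rw [← Function.Injective.summable_iff e_inj h_zero]
    constructor <;> intro hs <;> refine hs.congr fun p => ?_ <;>
      simp [hh, hg, Function.comp]
  have hg_iff : Summable g ↔ Summable (fun k : ℕ => rTail θ k) := by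
    rw [summable_prod_of_nonneg hgn]
    constructor
    · rintro ⟨_, h2⟩; exact h2
    · intro h2; exact ⟨fun k => summable_shift hθ k, h2⟩
  have hfiber : ∀ j : ℕ, (∑' k : ℕ, h (j, k)) = ((j : ℝ) + 1) * |θ (j + 1)| := by
    intro j
    have hz : ∀ k ∉ Finset.range (j + 1), h (j, k) = 0 := by
      intro k hk
      simp only [Finset.mem_range] at hk
      simp only [hh]; rw [if_neg]; omega
    rw [tsum_eq_sum hz]
    have : ∀ k ∈ Finset.range (j + 1), h (j, k) = |θ (j + 1)| := by
      intro k hk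
      simp only [Finset.mem_range] at hk
      simp only [hh]; rw [if_pos]; omega
    rw [Finset.sum_congr rfl this, Finset.sum_const, Finset.card_range, nsmul_eq_mul]
    push_cast; ring
  have hh_iff : Summable h ↔ Summable (fun j : ℕ => ((j : ℝ) + 1) * |θ (j + 1)|) := by
    rw [summable_prod_of_nonneg hhn]
    constructor
    · rintro ⟨_, h2⟩; exact h2.congr fun j => (hfiber j)
    · intro h2
      refine ⟨fun j => summable_of_ne_finset_zero (s := Finset.range (j+1)) ?_,
        h2.congr fun j => (hfiber j).symm⟩
      intro k hk
      simp only [Finset.mem_range] at hk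
      simp only [hh]; rw [if_neg]; omega
  have hshift : Summable (fun j : ℕ => ((j : ℝ) + 1) * |θ (j + 1)|) ↔
      Summable (fun k : ℕ => (k : ℝ) * |θ k|) := by
    rw [← summable_nat_add_iff 1 (f := fun k : ℕ => (k : ℝ) * |θ k|)]
    constructor <;> intro hs <;> refine hs.congr fun j => ?_ <;> push_cast <;> ring
  rw [← hg_iff, hghe, hh_iff, hshift]

lemma prod_pos_iff {a : ℕ → ℝ} {ε : ℝ} (hε : 0 < ε) (hal : ∀ k, ε ≤ a k) (hau : ∀ k, a k ≤ 1) :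
    (∃ L : ℝ, 0 < L ∧ Tendsto (fun n : ℕ => ∏ k ∈ Finset.range n, a k) atTop (nhds L)) ↔
    Summable (fun k : ℕ => 1 - a k) := by
  have hapos : ∀ k, 0 < a k := fun k => hε.trans_le (hal k)
  set s : ℕ → ℝ := fun k => -Real.log (a k) with hs
  have hsn : ∀ k, 0 ≤ s k := fun k => by
    simp only [hs, neg_nonneg]
    exact Real.log_nonpos (hapos k).le (hau k)
  have hlogprod : ∀ n : ℕ, ∑ k ∈ Finset.range n, s k =
      -Real.log (∏ k ∈ Finset.range n, a k) := by
    intro n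
    rw [Real.log_prod fun k _ => (hapos k).ne', ← Finset.sum_neg_distrib]
  constructor
  · rintro ⟨L, hL, hT⟩
    have hTlog : Tendsto (fun n : ℕ => ∑ k ∈ Finset.range n, s k) atTop (nhds (-Real.log L)) := by
      have := ((Real.continuousAt_log hL.ne').tendsto.comp hT).neg
      refine this.congr fun n => ?_
      simp [hlogprod n, Function.comp]
    have hmono : Monotone fun n : ℕ => ∑ k ∈ Finset.range n, s k := by
      intro i j hij
      exact Finset.sum_le_sum_of_subset_of_nonneg
        (Finset.range_subset_range.2 hij) (fun k _ _ => hsn k)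
    have hsum_s : Summable s :=
      summable_of_sum_range_le hsn (fun n => hmono.ge_of_tendsto hTlog n)
    refine Summable.of_nonneg_of_le (fun k => by linarith [hau k]) (fun k => ?_) hsum_s
    have := Real.log_le_sub_one_of_pos (hapos k)
    simp only [hs]; linarith
  · intro hsum_b
    have hsum_s : Summable s := by
      refine Summable.of_nonneg_of_le hsn (fun k => ?_) (hsum_b.mul_left ε⁻¹)
      have h1 : Real.log (a k)⁻¹ ≤ (a k)⁻¹ - 1 :=
        Real.log_le_sub_one_of_pos (inv_pos.2 (hapos k))
      rw [Real.log_inv] at h1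
      have h2 : (a k)⁻¹ - 1 = (1 - a k) / a k := by
        rw [eq_div_iff (hapos k).ne', sub_mul, inv_mul_cancel₀ (hapos k).ne']; ring
      have h3 : (1 - a k) / a k ≤ (1 - a k) / ε := by
        apply div_le_div_of_nonneg_left (by linarith [hau k]) hε (hal k)
      simp only [hs]
      calc -Real.log (a k) ≤ (a k)⁻¹ - 1 := by linarith
        _ = (1 - a k) / a k := h2
        _ ≤ (1 - a k) / ε := h3
        _ = ε⁻¹ * (1 - a k) := by rw [div_eq_inv_mul]
    have hsum_log : Summable fun k => Real.log (a k) := by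
      have := hsum_s.neg
      refine this.congr fun k => ?_
      simp [hs]
    refine ⟨Real.exp (∑' k, Real.log (a k)), Real.exp_pos _, ?_⟩
    have hT := hsum_log.hasSum.tendsto_sum_nat
    have := (Real.continuous_exp.tendsto _).comp hT
    refine this.congr fun n => ?_
    simp only [Function.comp]
    rw [Real.exp_sum]
    exact Finset.prod_congr rfl fun k _ => Real.exp_log (hapos k)

/-- if `C⁻ > 0`, the following are equivalent:
(i) `β = ∏_{k=0}^∞ a_k > 0` (the partial products converge to a positive limit);
(ii) `∑_k r_k < ∞`; (iii) `∑_k k |θ_k| < ∞`. -/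
theorem stmt17 (θ : ℕ → ℝ) (hθ : Summable fun k : ℕ => |θ (k + 1)|)
    (q : ℝ → ℝ) (hq_mono : StrictMono q) (hq01 : ∀ x, q x ∈ Set.Ioo (0:ℝ) 1)
    (hq_diff : ContDiff ℝ 1 q) (hCm : 0 < Cminus θ q) :
    ((∃ L : ℝ, 0 < L ∧
        Tendsto (fun n : ℕ => ∏ k ∈ Finset.range n, aBin θ q k) atTop (nhds L)) ↔
      Summable (fun k : ℕ => rTail θ k)) ∧
    (Summable (fun k : ℕ => rTail θ k) ↔
      Summable (fun k : ℕ => (k : ℝ) * |θ k|)) := by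
  have hB := fun k => aBin_bounds hθ hq_mono hq_diff k
  set D : ℝ := q (θ 0 + rTail θ 0) - q (θ 0 - rTail θ 0) with hD
  have hε : 0 < 1 - D := by
    have h1 := (hq01 (θ 0 + rTail θ 0)).2
    have h2 := (hq01 (θ 0 - rTail θ 0)).1
    simp only [hD]; linarith
  have hal : ∀ k, 1 - D ≤ aBin θ q k := fun k => by linarith [(hB k).2.2]
  have hau : ∀ k, aBin θ q k ≤ 1 := fun k => by
    have h0 : 0 ≤ 2 * Cminus θ q * rTail θ k :=
      mul_nonneg (by linarith) (rTail_nonneg θ k)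
    linarith [(hB k).1]
  refine ⟨?_, sum_rVsN hθ⟩
  rw [prod_pos_iff hε hal hau]
  have h2Cm : 0 < 2 * Cminus θ q := by linarith
  constructor
  · intro hbsum
    refine Summable.of_nonneg_of_le (rTail_nonneg θ) (fun k => ?_)
      (hbsum.mul_right (2 * Cminus θ q)⁻¹)
    have h1 := mul_le_mul_of_nonneg_right (hB k).1 (inv_pos.2 h2Cm).le
    rw [mul_comm (2 * Cminus θ q) (rTail θ k), mul_assoc,
      mul_inv_cancel₀ h2Cm.ne', mul_one] at h1
    exact h1
  · intro hrsum
    refine Summable.of_nonneg_of_le (fun k => ?_) (fun k => ?_)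
      (hrsum.mul_left (2 * Cplus θ q))
    · have h0 : 0 ≤ 2 * Cminus θ q * rTail θ k :=
        mul_nonneg (by linarith) (rTail_nonneg θ k)
      linarith [(hB k).1]
    · have := (hB k).2.1
      linarith
end
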